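/- Let M > 0 and Λ > 0 with 9ΛM² < 1, write S := √(1 − 9ΛM²), Ω_ph := S/(3√3·M), c_{λ,2} := √3·(45ΛM² − 2)/(243·M³·S), and let N̂(a) := 54M²/S² − (12√3·M·(2 + 9ΛM²)/S³)·a + (18ΛM²·(20 + 9ΛM²)/S⁴)·a² and D̂(a) := 1458M⁴/S⁴ − (324√3·M³·(2 + 9ΛM²)/S⁵)·a + (54M²·(4 + 90ΛM² + 81Λ²M⁴)/S⁶)·a². Then, as a → 0, √(N̂(a)/D̂(a)) − Ω_ph − c_{λ,2}·a² = O(a³). -/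

import Mathlib

open Asymptotics
set_option maxHeartbeats 1600000

/-- `S = √(1 - 9ΛM²)`. -/
noncomputable def S (M Λ : ℝ) : ℝ := Real.sqrt (1 - 9 * Λ * M ^ 2)

/-- Second-order expansion of the numerator `R''(r₊(a))`. -/
noncomputable def Nhat (M Λ a : ℝ) : ℝ :=
  54 * M ^ 2 / (S M Λ) ^ 2 -
    (12 * Real.sqrt 3 * M * (2 + 9 * Λ * M ^ 2) / (S M Λ) ^ 3) * a +
    (18 * Λ * M ^ 2 * (20 + 9 * Λ * M ^ 2) / (S M Λ) ^ 4) * a ^ 2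

/-- Second-order expansion of the denominator `2r₊(a)⁴·ṫ(r₊(a))²`. -/
noncomputable def Dhat (M Λ a : ℝ) : ℝ :=
  1458 * M ^ 4 / (S M Λ) ^ 4 -
    (324 * Real.sqrt 3 * M ^ 3 * (2 + 9 * Λ * M ^ 2) / (S M Λ) ^ 5) * a +
    (54 * M ^ 2 * (4 + 90 * Λ * M ^ 2 + 81 * Λ ^ 2 * M ^ 4) / (S M Λ) ^ 6) * a ^ 2

/-- with `Ω_ph = S/(3√3·M)` and `c_{λ,2} = √3·(45ΛM² - 2)/(243M³S)`,
one has `√(N̂(a)/D̂(a)) - Ω_ph - c_{λ,2}·a² = O(a³)` as `a → 0`. -/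
theorem stmt_10 (M Λ : ℝ) (hM : 0 < M) (hΛ : 0 < Λ) (hsub : 9 * Λ * M ^ 2 < 1) :
    (fun a : ℝ =>
        Real.sqrt (Nhat M Λ a / Dhat M Λ a) - S M Λ / (3 * Real.sqrt 3 * M) -
          (Real.sqrt 3 * (45 * Λ * M ^ 2 - 2) / (243 * M ^ 3 * S M Λ)) * a ^ 2)
      =O[nhds 0] fun a : ℝ => a ^ 3 := by
  have htpos : (0:ℝ) < Real.sqrt 3 := Real.sqrt_pos.2 (by norm_num)
  have ht2 : Real.sqrt 3 ^ 2 = 3 := Real.sq_sqrt (by norm_num)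
  have hσ : (0:ℝ) < 1 - 9 * Λ * M ^ 2 := by linarith
  have hspos : 0 < S M Λ := Real.sqrt_pos.2 hσ
  have hs2 : S M Λ ^ 2 = 1 - 9 * Λ * M ^ 2 := Real.sq_sqrt hσ.le
  set t := Real.sqrt 3 with htdef
  set s := S M Λ with hsdef
  set p : ℝ → ℝ := fun a =>
    s / (3 * t * M) + t * (45 * Λ * M ^ 2 - 2) / (243 * M ^ 3 * s) * a ^ 2 with hp
  set E : ℝ → ℝ := fun a =>
    ((-5668704*M^5 + 153055008*Λ*M^7 - 344373768*Λ^2*M^9 - 5165606520*Λ^3*M^11) * (s*t)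
     + (1417176*M^4 + 8503056*Λ*M^6 - 1348797258*Λ^2*M^8 + 9556372062*Λ^3*M^10
        + 7748409780*Λ^4*M^12) * a
     + (209952*M^3 - 8503056*Λ*M^5 + 63772920*Λ^2*M^7 + 478296900*Λ^3*M^9) * (s*t) * a^2
     + (-69984*M^2 + 1574640*Λ*M^4 + 34012224*Λ^2*M^6 - 733388580*Λ^3*M^8
        - 717445350*Λ^4*M^10) * a^3) / (1594323*M^6*(1-9*Λ*M^2)^4) with hE
  -- reduced-power forms
  have hN : ∀ a : ℝ, Nhat M Λ a =
      54*M^2/(1-9*Λ*M^2) - (12*M*(2+9*Λ*M^2)*(s*t)/(1-9*Λ*M^2)^2)*a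
        + (18*Λ*M^2*(20+9*Λ*M^2)/(1-9*Λ*M^2)^2)*a^2 := by
    intro a
    simp only [Nhat, ← hsdef, ← htdef]
    rw [← hs2]
    field_simp
  have hD : ∀ a : ℝ, Dhat M Λ a =
      1458*M^4/(1-9*Λ*M^2)^2 - (324*M^3*(2+9*Λ*M^2)*(s*t)/(1-9*Λ*M^2)^3)*a
        + (54*M^2*(4+90*Λ*M^2+81*Λ^2*M^4)/(1-9*Λ*M^2)^3)*a^2 := by
    intro a
    simp only [Dhat, ← hsdef, ← htdef]
    rw [← hs2]
    field_simp
  have hpu : ∀ a : ℝ, p a = (s*t)/(9*M) + ((s*t)*(45*Λ*M^2-2)/(243*M^3*(1-9*Λ*M^2)))*a^2 := by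
    intro a
    simp only [hp]
    have h1 : s/(3*t*M) = s*t/(9*M) := by
      rw [div_eq_div_iff (by positivity) (by positivity)]
      linear_combination (-3*s*M)*ht2
    rw [h1, ← hs2]
    field_simp
  have hu2 : (s*t)^2 = 3*(1-9*Λ*M^2) := by rw [mul_pow, hs2, ht2]; ring
  have key : ∀ a : ℝ, Nhat M Λ a - (p a)^2 * Dhat M Λ a = a ^ 3 * E a := by
    intro a
    rw [hN a, hD a, hpu a]
    simp only [hE]
    have hσu : 1 - 9*Λ*M^2 = (s*t)^2/3 := by rw [hu2]; ring
    have hΛe : Λ = (3 - (s*t)^2)/(27*M^2) := by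
      rw [hu2, eq_div_iff (by positivity)]; ring
    have hst : s*t ≠ 0 := (mul_pos hspos htpos).ne'
    have hM0 : M ≠ 0 := hM.ne'
    rw [hσu, hΛe]
    field_simp
    ring
  -- continuity facts
  have hNc : Continuous fun x : ℝ => Nhat M Λ x := by unfold Nhat; fun_prop
  have hDc : Continuous fun x : ℝ => Dhat M Λ x := by unfold Dhat; fun_prop
  have hpc : Continuous p := by rw [hp]; fun_prop
  have hEc : Continuous E := by rw [hE]; fun_prop
  have hN0 : 0 < Nhat M Λ 0 := by
    have h0 : Nhat M Λ 0 = 54 * M ^ 2 / (1 - 9*Λ*M^2) := by rw [hN 0]; ring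
    rw [h0]; exact div_pos (by positivity) hσ
  have hD0 : 0 < Dhat M Λ 0 := by
    have h0 : Dhat M Λ 0 = 1458 * M ^ 4 / (1 - 9*Λ*M^2)^2 := by rw [hD 0]; ring
    rw [h0]; exact div_pos (by positivity) (pow_pos hσ 2)
  have hp0 : 0 < p 0 := by
    have h0 : p 0 = (s*t)/(9*M) := by rw [hpu 0]; ring
    rw [h0]; exact div_pos (mul_pos hspos htpos) (by positivity)
  have hfc : ContinuousAt (fun x : ℝ => Real.sqrt (Nhat M Λ x / Dhat M Λ x)) 0 :=
    Real.continuous_sqrt.continuousAt.comp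
      ((hNc.continuousAt).div hDc.continuousAt hD0.ne')
  set h : ℝ → ℝ := fun x =>
    E x / (Dhat M Λ x * (Real.sqrt (Nhat M Λ x / Dhat M Λ x) + p x)) with hh
  have hden : Dhat M Λ 0 * (Real.sqrt (Nhat M Λ 0 / Dhat M Λ 0) + p 0) ≠ 0 :=
    (mul_pos hD0 (add_pos_of_nonneg_of_pos (Real.sqrt_nonneg _) hp0)).ne'
  have hhc : ContinuousAt h 0 := by
    rw [hh]
    exact hEc.continuousAt.div ((hDc.continuousAt).mul (hfc.add hpc.continuousAt)) hden
  have hev : ∀ᶠ x : ℝ in nhds 0,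
      Real.sqrt (Nhat M Λ x / Dhat M Λ x) - s / (3 * t * M)
        - t * (45 * Λ * M ^ 2 - 2) / (243 * M ^ 3 * s) * x ^ 2 = x ^ 3 * h x := by
    filter_upwards [hNc.continuousAt.eventually (eventually_gt_nhds hN0),
      hDc.continuousAt.eventually (eventually_gt_nhds hD0),
      hpc.continuousAt.eventually (eventually_gt_nhds hp0)] with x hNx hDx hpx
    have hfpx : 0 < Real.sqrt (Nhat M Λ x / Dhat M Λ x) + p x :=
      add_pos_of_nonneg_of_pos (Real.sqrt_nonneg _) hpx
    have hsq : Real.sqrt (Nhat M Λ x / Dhat M Λ x) ^ 2 = Nhat M Λ x / Dhat M Λ x :=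
      Real.sq_sqrt (div_pos hNx hDx).le
    have h1 : (Real.sqrt (Nhat M Λ x / Dhat M Λ x) - p x)
        * (Real.sqrt (Nhat M Λ x / Dhat M Λ x) + p x) = x ^ 3 * E x / Dhat M Λ x := by
      have expand : (Real.sqrt (Nhat M Λ x / Dhat M Λ x) - p x)
          * (Real.sqrt (Nhat M Λ x / Dhat M Λ x) + p x)
          = Real.sqrt (Nhat M Λ x / Dhat M Λ x) ^ 2 - p x ^ 2 := by ring
      rw [expand, hsq, eq_div_iff hDx.ne', sub_mul, div_mul_cancel₀ _ hDx.ne']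
      exact key x
    have h2 : Real.sqrt (Nhat M Λ x / Dhat M Λ x) - p x
        = x ^ 3 * E x / Dhat M Λ x / (Real.sqrt (Nhat M Λ x / Dhat M Λ x) + p x) :=
      eq_div_of_mul_eq hfpx.ne' h1
    calc Real.sqrt (Nhat M Λ x / Dhat M Λ x) - s / (3 * t * M)
          - t * (45 * Λ * M ^ 2 - 2) / (243 * M ^ 3 * s) * x ^ 2
        = Real.sqrt (Nhat M Λ x / Dhat M Λ x) - p x := by rw [hp]; ring
      _ = x ^ 3 * E x / Dhat M Λ x / (Real.sqrt (Nhat M Λ x / Dhat M Λ x) + p x) := h2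
      _ = x ^ 3 * h x := by
          simp only [hh]
          rw [div_div, mul_div_assoc]
  have hO1 : h =O[nhds 0] (fun _ : ℝ => (1:ℝ)) :=
    Filter.Tendsto.isBigO_one (F := ℝ) hhc
  have hO : (fun x : ℝ => x ^ 3 * h x) =O[nhds 0] fun x : ℝ => x ^ 3 := by
    have := (isBigO_refl (fun x : ℝ => x ^ 3) (nhds 0)).mul hO1
    simpa using this
  exact hO.congr' (Filter.EventuallyEq.symm hev) Filter.EventuallyEq.rfl
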